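/- The function d([K],[M]) = log ρ(K,M) + log ρ(M,K), where ρ(K,M) = inf{Vol(K')/Vol(M) : K' affinely equivalent to K, K' ⊇ M}, is a metric on the set of affine equivalence classes of convex bodies in ℝ^d: it is well-defined (invariant under replacing K, M by affine images), nonnegative, symmetric, zero iff [K]=[M], and satisfies the triangle inequality. -/

import Mathlib

open MeasureTheory

/-- `ρ(K,M)`: the infimum of `Vol(K')/Vol(M)` over affine images `K'` of `K`
containing `M`. -/
noncomputable def macbeathRho {d : ℕ} (K M : Set (EuclideanSpace ℝ (Fin d))) : ℝ :=
  sInf {t | ∃ f : EuclideanSpace ℝ (Fin d) ≃ᵃ[ℝ] EuclideanSpace ℝ (Fin d),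
    M ⊆ f '' K ∧ t = (volume (f '' K)).toReal / (volume M).toReal}

/-- Macbeath's distance `d([K],[M]) = log ρ(K,M) + log ρ(M,K)` between (classes of)
convex bodies. -/
noncomputable def macbeathDist {d : ℕ} (K M : Set (EuclideanSpace ℝ (Fin d))) : ℝ :=
  Real.log (macbeathRho K M) + Real.log (macbeathRho M K)

namespace MacbeathAux

open Metric Bornology Set Filter Pointwise

variable {d : ℕ}

local notation "E" => EuclideanSpace ℝ (Fin d)

def rhoSet (K M : Set (EuclideanSpace ℝ (Fin d))) : Set ℝ :=
  {t | ∃ f : EuclideanSpace ℝ (Fin d) ≃ᵃ[ℝ] EuclideanSpace ℝ (Fin d),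
    M ⊆ f '' K ∧ t = (volume (f '' K)).toReal / (volume M).toReal}

lemma rho_def (K M : Set E) : macbeathRho K M = sInf (rhoSet K M) := rfl

lemma vol_image_linear_add (L : E →ₗ[ℝ] E) (v : E) (s : Set E) :
    volume ((fun x => L x + v) '' s) = ENNReal.ofReal |LinearMap.det L| * volume s := by
  have h : (fun x => L x + v) '' s = v +ᵥ (⇑L '' s) := by
    ext y
    simp only [Set.mem_vadd_set, Set.mem_image]
    constructor
    · rintro ⟨x, hx, rfl⟩
      exact ⟨L x, ⟨x, hx, rfl⟩, by simp [vadd_eq_add, add_comm]⟩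
    · rintro ⟨z, ⟨x, hx, rfl⟩, rfl⟩
      exact ⟨x, hx, by simp [vadd_eq_add, add_comm]⟩
  rw [h, measure_vadd, Measure.addHaar_image_linearMap]

lemma vol_affine_image (f : E ≃ᵃ[ℝ] E) (s : Set E) :
    volume (⇑f '' s)
      = ENNReal.ofReal |LinearMap.det (f.linear : E →ₗ[ℝ] E)| * volume s := by
  have hfn : ∀ x, f x = (f.linear : E →ₗ[ℝ] E) x + f 0 := by
    intro x
    have h := congrFun (AffineMap.decomp (f : E →ᵃ[ℝ] E)) x
    simpa using h
  rw [show ⇑f '' s = (fun x => (f.linear : E →ₗ[ℝ] E) x + f 0) '' s from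
    Set.image_congr fun x _ => hfn x]
  exact vol_image_linear_add _ _ _

lemma det_abs_pos (f : E ≃ᵃ[ℝ] E) : 0 < |LinearMap.det (f.linear : E →ₗ[ℝ] E)| := by
  rw [abs_pos]
  exact f.linear.isUnit_det'.ne_zero

lemma image_symm_image (f : E ≃ᵃ[ℝ] E) (K : Set E) : ⇑f.symm '' (⇑f '' K) = K := by
  rw [Set.image_image]; simp

lemma image_compact (f : E ≃ᵃ[ℝ] E) {K : Set E} (h : IsCompact K) :
    IsCompact (⇑f '' K) := by
  have hc : Continuous ⇑f := by
    have := (f : E →ᵃ[ℝ] E).continuous_of_finiteDimensional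
    simpa using this
  exact h.image hc

lemma vol_ne_zero {K : Set E} (hKi : (interior K).Nonempty) : volume K ≠ 0 :=
  (lt_of_lt_of_le (isOpen_interior.measure_pos volume hKi)
    (measure_mono interior_subset)).ne'

lemma one_le_mem {K M : Set E} (hKc : IsCompact K) (hM0 : volume M ≠ 0) :
    ∀ t ∈ rhoSet K M, 1 ≤ t := by
  rintro t ⟨f, hsub, rfl⟩
  have hA : volume (⇑f '' K) ≠ ⊤ := (image_compact f hKc).measure_lt_top.ne
  have hBA : volume M ≤ volume (⇑f '' K) := measure_mono hsub
  have hMtop : volume M ≠ ⊤ := ne_top_of_le_ne_top hA hBA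
  have hBpos : 0 < (volume M).toReal := ENNReal.toReal_pos hM0 hMtop
  rw [le_div_iff₀ hBpos, one_mul]
  exact (ENNReal.toReal_le_toReal hMtop hA).mpr hBA

lemma bddBelow_rhoSet {K M : Set E} (hKc : IsCompact K) (hM0 : volume M ≠ 0) :
    BddBelow (rhoSet K M) :=
  ⟨1, fun t ht => one_le_mem hKc hM0 t ht⟩

lemma nonempty_rhoSet {K M : Set E} (hKi : (interior K).Nonempty)
    (hMb : IsBounded M) : (rhoSet K M).Nonempty := by
  obtain ⟨a, ha⟩ := hKi
  obtain ⟨ε, εpos, hball⟩ := Metric.isOpen_iff.1 isOpen_interior a ha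
  obtain ⟨R, hR⟩ := hMb.subset_closedBall a
  have hcpos : (0:ℝ) < (|R| + 1) / ε := by positivity
  set f : E ≃ᵃ[ℝ] E :=
    ((AffineEquiv.constVAdd ℝ E (-a)).trans
      (LinearEquiv.smulOfNeZero ℝ E _ hcpos.ne').toAffineEquiv).trans
      (AffineEquiv.constVAdd ℝ E a) with hf
  have hfx : ∀ x, f x = a + ((|R| + 1) / ε) • (-a + x) := by
    intro x
    simp [hf, AffineEquiv.trans_apply, LinearEquiv.smulOfNeZero, LinearEquiv.smulOfUnit, Units.smul_def, vadd_eq_add]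
  refine ⟨_, f, fun m hm => ?_, rfl⟩
  refine ⟨a + ((|R| + 1) / ε)⁻¹ • (m - a), interior_subset (hball ?_), ?_⟩
  · rw [Metric.mem_ball, dist_eq_norm]
    have hma : ‖m - a‖ ≤ R := by
      have := hR hm
      rwa [Metric.mem_closedBall, dist_eq_norm] at this
    have h1 : ‖a + ((|R| + 1) / ε)⁻¹ • (m - a) - a‖
        = ((|R| + 1) / ε)⁻¹ * ‖m - a‖ := by
      rw [add_sub_cancel_left, norm_smul, Real.norm_eq_abs, abs_of_pos (by positivity)]
    rw [h1]
    have hRabs : ‖m - a‖ < |R| + 1 := lt_of_le_of_lt (hma.trans (le_abs_self R)) (by linarith)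
    rw [inv_div]
    calc ε / (|R| + 1) * ‖m - a‖ < ε / (|R| + 1) * (|R| + 1) := by
          apply mul_lt_mul_of_pos_left hRabs (by positivity)
      _ = ε := div_mul_cancel₀ _ (by positivity)
  · rw [hfx, neg_add_cancel_left, smul_smul, mul_inv_cancel₀ hcpos.ne', one_smul,
      add_sub_cancel]

lemma one_le_rho {K M : Set E} (hKc : IsCompact K) (hKi : (interior K).Nonempty)
    (hMc : IsCompact M) (hMi : (interior M).Nonempty) : 1 ≤ macbeathRho K M := by
  rw [rho_def]
  exact le_csInf (nonempty_rhoSet hKi hMc.isBounded) (one_le_mem hKc (vol_ne_zero hMi))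

end MacbeathAux

namespace MacbeathAux

open Metric Bornology Set Filter Pointwise

variable {d : ℕ}

local notation "E" => EuclideanSpace ℝ (Fin d)

lemma rhoSet_image_subset (K M : Set E) (f g : E ≃ᵃ[ℝ] E) :
    rhoSet (⇑f '' K) (⇑g '' M) ⊆ rhoSet K M := by
  rintro t ⟨h, hsub, rfl⟩
  have himg : ⇑((f.trans h).trans g.symm) '' K = ⇑g.symm '' (⇑h '' (⇑f '' K)) := by
    simp [Set.image_image, AffineEquiv.trans_apply]
  refine ⟨(f.trans h).trans g.symm, ?_, ?_⟩
  · rw [himg]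
    intro m hm
    exact ⟨g m, hsub ⟨m, hm, rfl⟩, g.symm_apply_apply m⟩
  · have hA : volume (⇑((f.trans h).trans g.symm) '' K)
        = ENNReal.ofReal |LinearMap.det (g.symm.linear : E →ₗ[ℝ] E)|
            * volume (⇑h '' (⇑f '' K)) := by
      rw [himg]; exact vol_affine_image g.symm _
    have hB : volume M
        = ENNReal.ofReal |LinearMap.det (g.symm.linear : E →ₗ[ℝ] E)|
            * volume (⇑g '' M) := by
      conv_lhs => rw [show M = ⇑g.symm '' (⇑g '' M) from (image_symm_image g M).symm]
      exact vol_affine_image g.symm _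
    rw [hA, hB, ENNReal.toReal_mul, ENNReal.toReal_mul,
      ENNReal.toReal_ofReal (abs_nonneg _),
      mul_div_mul_left _ _ (det_abs_pos g.symm).ne']

lemma rhoSet_image (K M : Set E) (f g : E ≃ᵃ[ℝ] E) :
    rhoSet (⇑f '' K) (⇑g '' M) = rhoSet K M := by
  refine Set.Subset.antisymm (rhoSet_image_subset K M f g) ?_
  have := rhoSet_image_subset (⇑f '' K) (⇑g '' M) f.symm g.symm
  rwa [image_symm_image f K, image_symm_image g M] at this

lemma rho_image (K M : Set E) (f g : E ≃ᵃ[ℝ] E) :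
    macbeathRho (⇑f '' K) (⇑g '' M) = macbeathRho K M := by
  rw [rho_def, rho_def, rhoSet_image]

lemma mul_mem_rhoSet {K M N : Set E} (hM0 : volume M ≠ 0) (hMtop : volume M ≠ ⊤)
    {t1 t2 : ℝ} (h1 : t1 ∈ rhoSet K M) (h2 : t2 ∈ rhoSet M N) :
    t1 * t2 ∈ rhoSet K N := by
  obtain ⟨f, hf, rfl⟩ := h1
  obtain ⟨g, hg, rfl⟩ := h2
  have himg : ⇑(f.trans g) '' K = ⇑g '' (⇑f '' K) := by
    simp [Set.image_image, AffineEquiv.trans_apply]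
  refine ⟨f.trans g, ?_, ?_⟩
  · rw [himg]
    exact hg.trans (Set.image_mono hf)
  · have hA : volume (⇑(f.trans g) '' K)
        = ENNReal.ofReal |LinearMap.det (g.linear : E →ₗ[ℝ] E)| * volume (⇑f '' K) := by
      rw [himg]; exact vol_affine_image g _
    have hB : volume (⇑g '' M)
        = ENNReal.ofReal |LinearMap.det (g.linear : E →ₗ[ℝ] E)| * volume M :=
      vol_affine_image g M
    rw [hA, hB, ENNReal.toReal_mul, ENNReal.toReal_mul,
      ENNReal.toReal_ofReal (abs_nonneg _)]
    have hMr : (volume M).toReal ≠ 0 := ENNReal.toReal_ne_zero.mpr ⟨hM0, hMtop⟩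
    rcases eq_or_ne (volume N).toReal 0 with h | h
    · simp [h]
    · field_simp

lemma rho_mul_le {K M N : Set E}
    (hKc : IsCompact K) (hKi : (interior K).Nonempty)
    (hMc : IsCompact M) (hMi : (interior M).Nonempty)
    (hNc : IsCompact N) (hNi : (interior N).Nonempty) :
    macbeathRho K N ≤ macbeathRho K M * macbeathRho M N := by
  have ha : 1 ≤ macbeathRho K M := one_le_rho hKc hKi hMc hMi
  have hb : 1 ≤ macbeathRho M N := one_le_rho hMc hMi hNc hNi
  set a := macbeathRho K M
  set b := macbeathRho M N
  refine le_of_forall_pos_le_add fun δ hδ => ?_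
  have habpos : (0:ℝ) < a + b + 1 := by linarith
  have hεpos : (0:ℝ) < min 1 (δ / (a + b + 1)) := lt_min one_pos (div_pos hδ habpos)
  obtain ⟨t1, ht1, ht1'⟩ :=
    Real.lt_sInf_add_pos (nonempty_rhoSet hKi hMc.isBounded) hεpos
  obtain ⟨t2, ht2, ht2'⟩ :=
    Real.lt_sInf_add_pos (nonempty_rhoSet hMi hNc.isBounded) hεpos
  rw [← rho_def] at ht1' ht2'
  have hmem := mul_mem_rhoSet (vol_ne_zero hMi) hMc.measure_lt_top.ne ht1 ht2
  have hle : macbeathRho K N ≤ t1 * t2 := by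
    rw [rho_def]
    exact csInf_le (bddBelow_rhoSet hKc (vol_ne_zero hNi)) hmem
  have h11 : 1 ≤ t1 := one_le_mem hKc (vol_ne_zero hMi) t1 ht1
  have h12 : 1 ≤ t2 := one_le_mem hMc (vol_ne_zero hNi) t2 ht2
  have hε1 : min 1 (δ / (a + b + 1)) ≤ 1 := min_le_left _ _
  have hε2 : min 1 (δ / (a + b + 1)) * (a + b + 1) ≤ δ := by
    have h := min_le_right 1 (δ / (a + b + 1))
    calc min 1 (δ / (a + b + 1)) * (a + b + 1)
        ≤ (δ / (a + b + 1)) * (a + b + 1) := by nlinarith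
      _ = δ := div_mul_cancel₀ _ habpos.ne'
  nlinarith [mul_le_mul ht1'.le ht2'.le (by linarith) (by linarith : (0:ℝ) ≤ a + min 1 (δ / (a + b + 1)))]

end MacbeathAux

namespace MacbeathAux

open Metric Bornology Set Filter Pointwise

variable {d : ℕ}

local notation "E" => EuclideanSpace ℝ (Fin d)

set_option maxHeartbeats 1000000 in
lemma eq_image_of_rho_eq_one {K M : Set (EuclideanSpace ℝ (Fin d))}
    (hKc : IsCompact K) (hKv : Convex ℝ K) (hKi : (interior K).Nonempty)
    (hMc : IsCompact M) (hMi : (interior M).Nonempty)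
    (hrho : macbeathRho K M = 1) :
    ∃ f : EuclideanSpace ℝ (Fin d) ≃ᵃ[ℝ] EuclideanSpace ℝ (Fin d), M = ⇑f '' K := by
  have hM0 : volume M ≠ 0 := vol_ne_zero hMi
  have hK0 : volume K ≠ 0 := vol_ne_zero hKi
  have hMtop : volume M ≠ ⊤ := hMc.measure_lt_top.ne
  have hKtop : volume K ≠ ⊤ := hKc.measure_lt_top.ne
  have hvMpos : 0 < (volume M).toReal := ENNReal.toReal_pos hM0 hMtop
  have hvKpos : 0 < (volume K).toReal := ENNReal.toReal_pos hK0 hKtop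
  -- a minimizing sequence of affine maps
  have hseq : ∀ n : ℕ, ∃ f : E ≃ᵃ[ℝ] E, M ⊆ ⇑f '' K ∧
      (volume (⇑f '' K)).toReal / (volume M).toReal < 1 + 1/(n+1) := by
    intro n
    obtain ⟨t, ht, htl⟩ := Real.lt_sInf_add_pos (nonempty_rhoSet hKi hMc.isBounded)
      (show (0:ℝ) < 1/(n+1) by positivity)
    rw [← rho_def, hrho] at htl
    obtain ⟨f, hf, rfl⟩ := ht
    exact ⟨f, hf, htl⟩
  choose f hfsub hflt using hseq
  have hratio_ge : ∀ n, 1 ≤ (volume (⇑(f n) '' K)).toReal / (volume M).toReal :=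
    fun n => one_le_mem hKc hM0 _ ⟨f n, hfsub n, rfl⟩
  have htend : Tendsto (fun n : ℕ => (volume (⇑(f n) '' K)).toReal / (volume M).toReal)
      atTop (nhds 1) := by
    apply tendsto_of_tendsto_of_tendsto_of_le_of_le
      (g := fun _ : ℕ => (1:ℝ)) (h := fun n : ℕ => 1 + 1/(n+1))
      tendsto_const_nhds ?_ hratio_ge (fun n => (hflt n).le)
    have h0 : Tendsto (fun n : ℕ => 1 / ((n : ℝ) + 1)) atTop (nhds 0) :=
      tendsto_one_div_add_atTop_nhds_zero_nat
    have := (tendsto_const_nhds (x := (1:ℝ)) (f := atTop)).add h0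
    simpa using this
  have hvol_tend : Tendsto (fun n => (volume (⇑(f n) '' K)).toReal) atTop
      (nhds (volume M).toReal) := by
    have h := htend.mul_const (volume M).toReal
    rw [one_mul] at h
    refine h.congr fun n => ?_
    rw [div_mul_cancel₀ _ hvMpos.ne']
  -- geometric setup
  obtain ⟨b, hb⟩ := hMi
  obtain ⟨s, hspos, hball⟩ := Metric.isOpen_iff.1 isOpen_interior b hb
  have hballM : ball b s ⊆ M := hball.trans interior_subset
  have hbM : b ∈ M := hballM (mem_ball_self hspos)
  obtain ⟨RK, hRK⟩ := hKc.isBounded.subset_closedBall 0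
  have hRK0 : 0 ≤ RK := by
    obtain ⟨x, hx⟩ := hKi
    exact Metric.nonempty_closedBall.1 ⟨x, hRK (interior_subset hx)⟩
  set g : ℕ → (E ≃ᵃ[ℝ] E) := fun n => (f n).symm with hgdef
  have hgK : ∀ n, ∀ m ∈ M, g n m ∈ K := by
    intro n m hm
    obtain ⟨k, hk, hkm⟩ := hfsub n hm
    have he : g n m = k := by rw [← hkm]; exact (f n).symm_apply_apply k
    rwa [he]
  set L : ℕ → (E →L[ℝ] E) :=
    fun n => LinearMap.toContinuousLinearMap ((g n).linear : E →ₗ[ℝ] E) with hLdef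
  set c : ℕ → E := fun n => g n 0 with hcdef
  have hdecomp : ∀ n x, g n x = L n x + c n := by
    intro n x
    have h := congrFun (AffineMap.decomp ((g n : E →ᵃ[ℝ] E))) x
    simpa [hLdef, hcdef, LinearMap.coe_toContinuousLinearMap'] using h
  -- uniform bounds
  have hLbound : ∀ n, ‖L n‖ ≤ 4 * RK / s := by
    intro n
    refine ContinuousLinearMap.opNorm_le_bound _ (by positivity) fun v => ?_
    rcases eq_or_ne v 0 with rfl | hv
    · simp
    · have hnv : 0 < ‖v‖ := norm_pos_iff.2 hv
      set w := (s / (2 * ‖v‖)) • v with hw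
      have hbw : b + w ∈ M := by
        apply hballM
        rw [Metric.mem_ball, dist_eq_norm, add_sub_cancel_left, hw, norm_smul,
          Real.norm_eq_abs, abs_of_pos (by positivity)]
        rw [div_mul_eq_mul_div, div_lt_iff₀ (by positivity)]
        nlinarith
      have h1 : g n (b + w) ∈ K := hgK n _ hbw
      have h2 : g n b ∈ K := hgK n _ hbM
      have hLw : L n w = g n (b + w) - g n b := by
        rw [hdecomp, hdecomp, map_add]; abel
      have hLwnorm : ‖L n w‖ ≤ 2 * RK := by
        rw [hLw]
        have e1 : ‖g n (b+w)‖ ≤ RK := mem_closedBall_zero_iff.1 (hRK h1)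
        have e2 : ‖g n b‖ ≤ RK := mem_closedBall_zero_iff.1 (hRK h2)
        calc ‖g n (b+w) - g n b‖ ≤ ‖g n (b+w)‖ + ‖g n b‖ := norm_sub_le _ _
          _ ≤ 2*RK := by linarith
      have hLw2 : ‖L n w‖ = (s / (2 * ‖v‖)) * ‖L n v‖ := by
        rw [hw, (L n).map_smul, norm_smul, Real.norm_eq_abs, abs_of_pos (by positivity)]
      rw [hLw2, div_mul_eq_mul_div, div_le_iff₀ (by positivity)] at hLwnorm
      rw [div_mul_eq_mul_div, le_div_iff₀ hspos]
      nlinarith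
  have hcbound : ∀ n, ‖c n‖ ≤ RK + (4 * RK / s) * ‖b‖ := by
    intro n
    have h2 : g n b ∈ K := hgK n _ hbM
    have e2 : ‖g n b‖ ≤ RK := mem_closedBall_zero_iff.1 (hRK h2)
    have he : c n = g n b - L n b := by rw [hdecomp n b]; abel
    rw [he]
    calc ‖g n b - L n b‖ ≤ ‖g n b‖ + ‖L n b‖ := norm_sub_le _ _
      _ ≤ RK + (4 * RK / s) * ‖b‖ := add_le_add e2 (((L n).le_opNorm b).trans
          (mul_le_mul_of_nonneg_right (hLbound n) (norm_nonneg b)))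
  -- extract a convergent subsequence
  have hcompact : IsCompact ((closedBall (0 : E →L[ℝ] E) (4 * RK / s)) ×ˢ
      (closedBall (0 : E) (RK + (4 * RK / s) * ‖b‖))) :=
    (isCompact_closedBall _ _).prod (isCompact_closedBall _ _)
  have hmem : ∀ n, (L n, c n) ∈ (closedBall (0 : E →L[ℝ] E) (4 * RK / s)) ×ˢ
      (closedBall (0 : E) (RK + (4 * RK / s) * ‖b‖)) := fun n =>
    ⟨mem_closedBall_zero_iff.2 (hLbound n), mem_closedBall_zero_iff.2 (hcbound n)⟩
  obtain ⟨⟨L0, c0⟩, -, φ, hφ, hφt⟩ := hcompact.tendsto_subseq hmem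
  have hLt : Tendsto (fun n => L (φ n)) atTop (nhds L0) :=
    (continuous_fst.tendsto _).comp hφt
  have hct : Tendsto (fun n => c (φ n)) atTop (nhds c0) :=
    (continuous_snd.tendsto _).comp hφt
  set gg : E → E := fun x => L0 x + c0 with hggdef
  have hggcont : Continuous gg := L0.continuous.add continuous_const
  have hptw : ∀ x, Tendsto (fun n => g (φ n) x) atTop (nhds (gg x)) := by
    intro x
    have h1 : Tendsto (fun n => L (φ n) x) atTop (nhds (L0 x)) :=
      ((ContinuousLinearMap.apply ℝ E x).continuous.tendsto L0).comp hLt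
    exact (h1.add hct).congr fun n => (hdecomp (φ n) x).symm
  have hsubK : gg '' M ⊆ K := by
    rintro y ⟨m, hm, rfl⟩
    exact hKc.isClosed.mem_of_tendsto (hptw m)
      (Filter.Eventually.of_forall fun n => hgK (φ n) m hm)
  -- determinants
  have hdetL : ∀ n, ContinuousLinearMap.det (L n)
      = LinearMap.det ((g n).linear : E →ₗ[ℝ] E) := by
    intro n
    have hco : ((L n : E →L[ℝ] E) : E →ₗ[ℝ] E) = ((g n).linear : E →ₗ[ℝ] E) := by
      rw [hLdef]; exact LinearMap.coe_toContinuousLinearMap _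
    show LinearMap.det ((L n : E →L[ℝ] E) : E →ₗ[ℝ] E) = _
    rw [hco]
  have hvfn_pos : ∀ n, 0 < (volume (⇑(f n) '' K)).toReal := by
    intro n
    have h := (one_le_div hvMpos).mp (hratio_ge n)
    linarith
  have hdetg : ∀ n, |LinearMap.det ((g n).linear : E →ₗ[ℝ] E)|
      * (volume (⇑(f n) '' K)).toReal = (volume K).toReal := by
    intro n
    have himg : ⇑(g n) '' (⇑(f n) '' K) = K := image_symm_image (f n) K
    have h := congrArg ENNReal.toReal (vol_affine_image (g n) (⇑(f n) '' K))
    rw [himg, ENNReal.toReal_mul, ENNReal.toReal_ofReal (abs_nonneg _)] at h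
    exact h.symm
  have habs_tend : Tendsto (fun n => |ContinuousLinearMap.det (L (φ n))|) atTop
      (nhds ((volume K).toReal / (volume M).toReal)) := by
    have heq : ∀ n, |ContinuousLinearMap.det (L n)|
        = (volume K).toReal / (volume (⇑(f n) '' K)).toReal := by
      intro n
      rw [hdetL n]
      exact (eq_div_iff (hvfn_pos n).ne').mpr (hdetg n)
    have hsub : Tendsto (fun n => (volume (⇑(f (φ n)) '' K)).toReal) atTop
        (nhds (volume M).toReal) := hvol_tend.comp hφ.tendsto_atTop
    have h := (tendsto_const_nhds (x := (volume K).toReal) (f := atTop)).div hsub hvMpos.ne'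
    exact h.congr fun n => (heq (φ n)).symm
  have habs_tend' : Tendsto (fun n => |ContinuousLinearMap.det (L (φ n))|) atTop
      (nhds (|ContinuousLinearMap.det L0|)) :=
    ((ContinuousLinearMap.continuous_det.tendsto L0).comp hLt).abs
  have hdet0 : |ContinuousLinearMap.det L0| = (volume K).toReal / (volume M).toReal :=
    tendsto_nhds_unique habs_tend' habs_tend
  have hdetpos : 0 < |ContinuousLinearMap.det L0| := by
    rw [hdet0]; exact div_pos hvKpos hvMpos
  have hdetne : LinearMap.det ((L0 : E →ₗ[ℝ] E)) ≠ 0 := by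
    have : ContinuousLinearMap.det L0 = LinearMap.det ((L0 : E →ₗ[ℝ] E)) := rfl
    rw [← this]
    exact abs_pos.1 hdetpos
  -- volume of the limit image
  have hvolgg : volume (gg '' M) = volume K := by
    have h1 : volume (gg '' M)
        = ENNReal.ofReal |LinearMap.det ((L0 : E →ₗ[ℝ] E))| * volume M := by
      have h := vol_image_linear_add ((L0 : E →ₗ[ℝ] E)) c0 M
      simpa [hggdef] using h
    have h2 : |LinearMap.det ((L0 : E →ₗ[ℝ] E))|
        = (volume K).toReal / (volume M).toReal := hdet0
    have h3 : ENNReal.ofReal ((volume K).toReal / (volume M).toReal)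
        * ENNReal.ofReal ((volume M).toReal) = volume K := by
      rw [← ENNReal.ofReal_mul (le_of_lt (div_pos hvKpos hvMpos)),
        div_mul_cancel₀ _ hvMpos.ne', ENNReal.ofReal_toReal hKtop]
    rw [h1, h2]
    nth_rewrite 2 [← ENNReal.ofReal_toReal hMtop]
    exact h3
  -- equality of sets
  have hGM : gg '' M = K := by
    refine Set.Subset.antisymm hsubK ?_
    by_contra hnot
    obtain ⟨x, hxK, hxG⟩ := Set.not_subset.1 hnot
    have hGclosed : IsClosed (gg '' M) := (hMc.image hggcont).isClosed
    obtain ⟨ε, hεpos, hεball⟩ := Metric.isOpen_iff.1 hGclosed.isOpen_compl x hxG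
    obtain ⟨y, hy⟩ := hKi
    have htpos : (0:ℝ) < min 1 (ε / (2 * (‖y - x‖ + 1))) := lt_min one_pos (by positivity)
    have ht1 : min 1 (ε / (2 * (‖y - x‖ + 1))) ≤ 1 := min_le_left _ _
    have hz : x + (min 1 (ε / (2 * (‖y - x‖ + 1)))) • (y - x) ∈ interior K :=
      hKv.add_smul_sub_mem_interior hxK hy ⟨htpos, ht1⟩
    have hznear : x + (min 1 (ε / (2 * (‖y - x‖ + 1)))) • (y - x) ∈ ball x ε := by
      rw [Metric.mem_ball, dist_eq_norm, add_sub_cancel_left, norm_smul,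
        Real.norm_eq_abs, abs_of_pos htpos]
      have hle : min 1 (ε / (2 * (‖y - x‖ + 1))) ≤ ε / (2 * (‖y - x‖ + 1)) :=
        min_le_right _ _
      have hn : (0:ℝ) ≤ ‖y - x‖ := norm_nonneg _
      have hqe : (ε / (2 * (‖y - x‖ + 1))) * (2 * (‖y - x‖ + 1)) = ε :=
        div_mul_cancel₀ _ (by positivity)
      nlinarith [mul_le_mul_of_nonneg_right hle hn]
    have hOopen : IsOpen (ball x ε ∩ interior K) := isOpen_ball.inter isOpen_interior
    have hOne : (ball x ε ∩ interior K).Nonempty := ⟨_, hznear, hz⟩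
    have hOsub : ball x ε ∩ interior K ⊆ K \ gg '' M := fun p hp =>
      ⟨interior_subset hp.2, fun hpG => (hεball hp.1) hpG⟩
    have h0 : volume (K \ gg '' M) = 0 := by
      have hd := measure_diff (μ := volume) hsubK
        (hMc.image hggcont).isClosed.measurableSet.nullMeasurableSet
        (show volume (gg '' M) ≠ ⊤ by rw [hvolgg]; exact hKtop)
      rw [hvolgg, tsub_self] at hd
      exact hd
    have hpos := hOopen.measure_pos volume hOne
    have hle := measure_mono (μ := volume) hOsub
    rw [h0] at hle
    exact hpos.ne' (le_zero_iff.mp hle)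
  -- build the affine equivalence
  set Leq : E ≃ₗ[ℝ] E := LinearMap.equivOfDetNeZero ((L0 : E →ₗ[ℝ] E)) hdetne with hLeq
  set e : E ≃ᵃ[ℝ] E := Leq.toAffineEquiv.trans (AffineEquiv.constVAdd ℝ E c0) with he
  have hee : ∀ x, e x = gg x := by
    intro x
    have hLeqx : Leq x = L0 x := by
      have := LinearEquiv.coe_ofIsUnitDet (f := ((L0 : E →ₗ[ℝ] E)))
        (v := Module.finBasis ℝ E) (v' := Module.finBasis ℝ E)
      simp [hLeq, LinearMap.equivOfDetNeZero]
    simp [he, hggdef, AffineEquiv.trans_apply, vadd_eq_add, hLeqx, add_comm]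
  have hek : ⇑e '' M = K := by
    rw [Set.image_congr fun x _ => hee x]
    exact hGM
  refine ⟨e.symm, ?_⟩
  rw [← hek]
  exact (image_symm_image e M).symm

end MacbeathAux

namespace MacbeathAux

open Metric Bornology Set Filter Pointwise

variable {d : ℕ}

local notation "E" => EuclideanSpace ℝ (Fin d)

lemma rho_eq_one_of_image {K M : Set E} (hKc : IsCompact K)
    (hKi : (interior K).Nonempty) (hMc : IsCompact M) (hMi : (interior M).Nonempty)
    (f : E ≃ᵃ[ℝ] E) (hf : M = ⇑f '' K) : macbeathRho K M = 1 := by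
  have hMr : (volume M).toReal ≠ 0 :=
    (ENNReal.toReal_pos (vol_ne_zero hMi) hMc.measure_lt_top.ne).ne'
  have hmem : (1:ℝ) ∈ rhoSet K M := ⟨f, hf.subset, by rw [← hf, div_self hMr]⟩
  have hle : macbeathRho K M ≤ 1 := by
    rw [rho_def]
    exact csInf_le (bddBelow_rhoSet hKc (vol_ne_zero hMi)) hmem
  exact le_antisymm hle (one_le_rho hKc hKi hMc hMi)

end MacbeathAux


open MacbeathAux

/-- `d([K],[M]) = log ρ(K,M) + log ρ(M,K)` is a metric on affine equivalence classes of
convex bodies in `ℝ^d`: it is invariant under replacing `K`, `M` by affine images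
(well-defined on classes), nonnegative, symmetric, vanishes exactly when `K` and `M` are
affinely equivalent, and satisfies the triangle inequality. -/
theorem macbeathDist_is_metric (d : ℕ)
    (K M N : Set (EuclideanSpace ℝ (Fin d)))
    (hKc : IsCompact K) (hKv : Convex ℝ K) (hKi : (interior K).Nonempty)
    (hMc : IsCompact M) (hMv : Convex ℝ M) (hMi : (interior M).Nonempty)
    (hNc : IsCompact N) (hNv : Convex ℝ N) (hNi : (interior N).Nonempty) :
    (∀ f g : EuclideanSpace ℝ (Fin d) ≃ᵃ[ℝ] EuclideanSpace ℝ (Fin d),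
        macbeathDist (f '' K) (g '' M) = macbeathDist K M) ∧
    0 ≤ macbeathDist K M ∧
    macbeathDist K M = macbeathDist M K ∧
    (macbeathDist K M = 0 ↔
      ∃ f : EuclideanSpace ℝ (Fin d) ≃ᵃ[ℝ] EuclideanSpace ℝ (Fin d), M = f '' K) ∧
    macbeathDist K N ≤ macbeathDist K M + macbeathDist M N := by
  have hKM : 1 ≤ macbeathRho K M := one_le_rho hKc hKi hMc hMi
  have hMK : 1 ≤ macbeathRho M K := one_le_rho hMc hMi hKc hKi
  have hKN : 1 ≤ macbeathRho K N := one_le_rho hKc hKi hNc hNi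
  have hNK : 1 ≤ macbeathRho N K := one_le_rho hNc hNi hKc hKi
  have hMN : 1 ≤ macbeathRho M N := one_le_rho hMc hMi hNc hNi
  have hNM : 1 ≤ macbeathRho N M := one_le_rho hNc hNi hMc hMi
  refine ⟨?_, ?_, ?_, ?_, ?_⟩
  · intro f g
    unfold macbeathDist
    rw [rho_image K M f g, rho_image M K g f]
  · exact add_nonneg (Real.log_nonneg hKM) (Real.log_nonneg hMK)
  · unfold macbeathDist; exact add_comm _ _
  · constructor
    · intro h0
      have l1 : 0 ≤ Real.log (macbeathRho K M) := Real.log_nonneg hKM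
      have l2 : 0 ≤ Real.log (macbeathRho M K) := Real.log_nonneg hMK
      have h1 : Real.log (macbeathRho K M) = 0 := by
        unfold macbeathDist at h0; linarith
      have hr1 : macbeathRho K M = 1 := by
        rcases Real.log_eq_zero.1 h1 with h | h | h
        · exfalso; rw [h] at hKM; linarith
        · exact h
        · exfalso; rw [h] at hKM; linarith
      exact eq_image_of_rho_eq_one hKc hKv hKi hMc hMi hr1
    · rintro ⟨f, hf⟩
      have hr1 : macbeathRho K M = 1 :=
        rho_eq_one_of_image hKc hKi hMc hMi f hf
      have hr2 : macbeathRho M K = 1 := by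
        refine rho_eq_one_of_image hMc hMi hKc hKi f.symm ?_
        rw [hf]
        exact (image_symm_image f K).symm
      simp [macbeathDist, hr1, hr2]
  · have t1 : Real.log (macbeathRho K N)
        ≤ Real.log (macbeathRho K M) + Real.log (macbeathRho M N) := by
      rw [← Real.log_mul (by linarith) (by linarith)]
      exact Real.log_le_log (by linarith)
        (rho_mul_le hKc hKi hMc hMi hNc hNi)
    have t2 : Real.log (macbeathRho N K)
        ≤ Real.log (macbeathRho N M) + Real.log (macbeathRho M K) := by
      rw [← Real.log_mul (by linarith) (by linarith)]
      exact Real.log_le_log (by linarith)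
        (rho_mul_le hNc hNi hMc hMi hKc hKi)
    unfold macbeathDist
    linarith
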